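/- Let V be a finite-dimensional real vector space, ω : V → V → ℝ an alternating bilinear form, K = {v ∈ V | ∀ w ∈ V, ω(v, w) = 0} its kernel (as a subspace of V), and p : V →ₗ[ℝ] K a linear map with p(x) = x for all x ∈ K (a projection of V onto K). Define the bilinear form ω̃ on Ṽ = V × (Dual ℝ K) by ω̃((v, α), (w, β)) = ω(v, w) + β(p v) − α(p w). Then ω̃ is a nondegenerate alternating bilinear form on Ṽ; that is, ω̃ is a symplectic form on V × (Dual ℝ K). -/

import Mathlib

open Module

/-- Linear symplectic thickening: if `K` is the kernel of an alternating
bilinear form `ω` on a finite-dimensional real vector space `V` and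
`p : V → K` is a projection onto `K` (i.e. `p x = x` for `x ∈ K`), then the
bilinear form `Ω((v, α), (w, β)) = ω v w + β (p v) - α (p w)` on
`V × Dual ℝ K` is a nondegenerate alternating bilinear form, i.e. a
symplectic form. -/
theorem stmt7 (V : Type*) [AddCommGroup V] [Module ℝ V] [FiniteDimensional ℝ V]
    (ω : V →ₗ[ℝ] V →ₗ[ℝ] ℝ) (hω : LinearMap.BilinForm.IsAlt ω)
    (K : Submodule ℝ V) (hK : ∀ v, v ∈ K ↔ ∀ w, ω v w = 0)
    (p : V →ₗ[ℝ] K) (hp : ∀ x : K, p (x : V) = x)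
    (Ω : (V × Dual ℝ K) →ₗ[ℝ] (V × Dual ℝ K) →ₗ[ℝ] ℝ)
    (hΩ : ∀ (v w : V) (α β : Dual ℝ K),
      Ω (v, α) (w, β) = ω v w + β (p v) - α (p w)) :
    LinearMap.BilinForm.IsAlt Ω ∧ LinearMap.BilinForm.Nondegenerate Ω := by
  constructor
  · rintro ⟨v, α⟩
    rw [hΩ, hω v]
    ring
  · refine (LinearMap.IsRefl.nondegenerate_iff_separatingLeft
      (LinearMap.IsAlt.isRefl fun ⟨v, α⟩ => by rw [hΩ, hω v]; ring)).mpr ?_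
    rintro ⟨v, α⟩ h
    -- p v = 0 : test with w = 0, arbitrary β
    have hpv : p v = 0 := by
      have h0 : ∀ β : Dual ℝ K, β (p v) = 0 := by
        intro β
        have := h (0, β)
        rw [hΩ] at this
        simpa using this
      exact (Module.forall_dual_apply_eq_zero_iff ℝ (p v)).mp h0
    -- key: ω v w = α (p w) for all w
    have key : ∀ w, ω v w = α (p w) := by
      intro w
      have := h (w, 0)
      rw [hΩ] at this
      simp only [hpv, map_zero] at this
      linarith
    -- α = 0
    have hα : α = 0 := by
      ext x
      have := key (x : V)
      rw [hp] at this
      have hx : ω (x : V) v = 0 := (hK x).mp x.2 v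
      have h2 : ω v (x : V) = 0 := by
        have hs := LinearMap.IsAlt.neg hω x v
        linarith
      simp [← this, h2]
    have hvK : v ∈ K := (hK v).mpr fun w => by simp [key w, hα]
    have hv0 : v = 0 := by
      have h3 : p v = (⟨v, hvK⟩ : K) := hp ⟨v, hvK⟩
      have := h3.symm.trans hpv
      simpa using congrArg Subtype.val this
    simp [Prod.ext_iff, hv0, hα]
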